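/- arXiv:0712.0407 — 2 statements merged into one kernel-verified Lean document; each statement's English description precedes it below -/
import Mathlib

section
/- Let γ ∈ (0,1) and ω_γ be the harmonic measure of the arc {ζ ∈ T : |1−ζ| ≤ γ} with respect to the unit disk. Then for every z ∈ D with |1−z| ≤ γ one has ω_γ(z) ≥ 1/4. -/
open Complex Real

/-- The harmonic measure (at `z` in the unit disk) of the symmetric arc
`{ζ ∈ T : |1−ζ| ≤ γ}`, expressed as the Poisson integral of the indicator of the arc. -/
noncomputable def omegaGamma (γ : ℝ) (z : ℂ) : ℝ :=
  (1 / (2 * Real.pi)) * ∫ t in (0:ℝ)..(2 * Real.pi),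
    (if ‖1 - Complex.exp (t * Complex.I)‖ ≤ γ then
      (1 - ‖z‖ ^ 2) / ‖Complex.exp (t * Complex.I) - z‖ ^ 2
    else 0)

set_option maxHeartbeats 1000000

lemma arctan_sum_ge (x y : ℝ) (hx : 0 ≤ x) (h : 1 ≤ x + y + x*y) :
    π/4 ≤ Real.arctan x + Real.arctan y := by
  have h1x : (0:ℝ) < 1 + x := by linarith
  have hy : (1 - x)/(1 + x) ≤ y := by
    rw [div_le_iff₀ h1x]; nlinarith
  have hlt : ((1 - x)/(1 + x)) * x < 1 := by
    rw [div_mul_eq_mul_div, div_lt_one h1x]; nlinarith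
  have hid : Real.arctan ((1 - x)/(1 + x)) + Real.arctan x = π/4 := by
    rw [Real.arctan_add hlt]
    have hne : (1:ℝ) - (1 - x)/(1+x)*x ≠ 0 := by
      have : (1:ℝ) - (1 - x)/(1+x)*x = (1 + x^2)/(1+x) := by field_simp; ring
      rw [this]; positivity
    have : ((1 - x) / (1 + x) + x) / (1 - (1 - x) / (1 + x) * x) = 1 := by
      rw [div_eq_one_iff_eq hne]; field_simp; ring
    rw [this, Real.arctan_one]
  have hmono := Real.arctan_strictMono.monotone hy
  linarith

lemma core_ineq (γ a r θ : ℝ) (hγ0 : 0 < γ) (hγ1 : γ < 1)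
    (ha : a = 2 * Real.arcsin (γ/2)) (hr0 : 0 < r) (hr1 : r < 1)
    (hθ0 : 0 ≤ θ) (hθ2 : θ < π/2)
    (hcon : 1 + r^2 - 2*r*Real.cos θ ≤ γ^2) :
    π/4 ≤ Real.arctan ((1+r)/(1-r) * Real.tan ((a+θ)/2)) +
          Real.arctan ((1+r)/(1-r) * Real.tan ((a-θ)/2)) := by
  have hπ := Real.pi_pos
  have h1r : (0:ℝ) < 1 - r := by linarith
  have ha0 : 0 < a := by
    rw [ha]; have : 0 < Real.arcsin (γ/2) := Real.arcsin_pos.2 (by linarith); linarith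
  have ha4 : a < π/2 := by
    rw [ha]
    have hs2 : (1:ℝ) < Real.sqrt 2 := by
      have : (1:ℝ) = Real.sqrt 1 := (Real.sqrt_one).symm
      rw [this]; exact Real.sqrt_lt_sqrt (by norm_num) (by norm_num)
    have h2 : Real.arcsin (γ/2) < π/4 := by
      rw [Real.arcsin_lt_iff_lt_sin' ⟨by linarith, by linarith⟩, Real.sin_pi_div_four]
      nlinarith
    linarith
  -- γ² = 2 - 2 cos a
  have hsh : Real.sin (a/2) = γ/2 := by
    rw [ha, show 2 * Real.arcsin (γ/2) / 2 = Real.arcsin (γ/2) by ring]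
    exact Real.sin_arcsin (by linarith) (by linarith)
  have hch : 0 ≤ Real.cos (a/2) := Real.cos_nonneg_of_mem_Icc ⟨by linarith, by linarith⟩
  have hγ2 : γ^2 = 2 - 2*Real.cos a := by
    have h := Real.cos_two_mul' (a/2)
    rw [show 2*(a/2) = a by ring] at h
    have hpyth := Real.sin_sq_add_cos_sq (a/2)
    nlinarith [hsh, h]
  -- positivity of cosines
  have hcθ : 0 < Real.cos θ := Real.cos_pos_of_mem_Ioo ⟨by linarith, hθ2⟩
  have hp0 : 0 ≤ (a+θ)/2 := by linarith
  have hp2 : (a+θ)/2 < π/2 := by linarith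
  have hm1 : -(π/2) < (a-θ)/2 := by linarith
  have hm2 : (a-θ)/2 < π/2 := by linarith
  have hcp : 0 < Real.cos ((a+θ)/2) := Real.cos_pos_of_mem_Ioo ⟨by linarith, hp2⟩
  have hcm : 0 < Real.cos ((a-θ)/2) := Real.cos_pos_of_mem_Ioo ⟨hm1, hm2⟩
  -- sin a + cos a ≥ 1
  have hsa : 0 ≤ Real.sin a := Real.sin_nonneg_of_nonneg_of_le_pi (by linarith) (by linarith)
  have hca : 0 ≤ Real.cos a := Real.cos_nonneg_of_mem_Icc ⟨by linarith, by linarith⟩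
  have hsa1 : Real.sin a ≤ 1 := Real.sin_le_one a
  have hca1 : Real.cos a ≤ 1 := Real.cos_le_one a
  have hsum1 : 1 ≤ Real.sin a + Real.cos a := by
    nlinarith [Real.sin_sq_add_cos_sq a]
  -- polynomial inequality
  have hpoly : 2*(1+r^2)*Real.cos a ≤ 2*(1-r^2)*Real.sin a + 4*r*Real.cos θ := by
    nlinarith [mul_nonneg (by nlinarith : (0:ℝ) ≤ 1 - r^2)
      (by linarith : (0:ℝ) ≤ Real.sin a + Real.cos a - 1)]
  -- trig identities
  have e1 := Real.sin_add ((a+θ)/2) ((a-θ)/2)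
  rw [show (a+θ)/2 + (a-θ)/2 = a by ring] at e1
  have e2 := Real.cos_sub ((a+θ)/2) ((a-θ)/2)
  rw [show (a+θ)/2 - (a-θ)/2 = θ by ring] at e2
  have e3 := Real.cos_add ((a+θ)/2) ((a-θ)/2)
  rw [show (a+θ)/2 + (a-θ)/2 = a by ring] at e3
  set sp := Real.sin ((a+θ)/2)
  set cp := Real.cos ((a+θ)/2)
  set sm := Real.sin ((a-θ)/2)
  set cm := Real.cos ((a-θ)/2)
  have esp : sp*sm = (Real.cos θ - Real.cos a)/2 := by
    rw [e2, e3]; ring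
  have ecp : cp*cm = (Real.cos θ + Real.cos a)/2 := by
    rw [e2, e3]; ring
  set k := (1+r)/(1-r) with hk
  have hk0 : 0 < k := by positivity
  have hkey : cp*cm ≤ k * Real.sin a + k^2 * (sp*sm) := by
    rw [← sub_nonneg]
    have heq : k * Real.sin a + k^2*(sp*sm) - cp*cm
        = (2*(1-r^2)*Real.sin a + 4*r*Real.cos θ - 2*(1+r^2)*Real.cos a) / (2*(1-r)^2) := by
      rw [esp, ecp, hk]; field_simp; ring
    rw [heq]
    apply div_nonneg (by linarith) (by positivity)
  -- reduce to arctan_sum_ge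
  have htp : 0 ≤ Real.tan ((a+θ)/2) :=
    Real.tan_nonneg_of_nonneg_of_le_pi_div_two hp0 (le_of_lt hp2)
  have hx : 0 ≤ k * Real.tan ((a+θ)/2) := mul_nonneg (le_of_lt hk0) htp
  apply arctan_sum_ge _ _ hx
  have hts : Real.tan ((a+θ)/2) = sp/cp := Real.tan_eq_sin_div_cos _
  have htm : Real.tan ((a-θ)/2) = sm/cm := Real.tan_eq_sin_div_cos _
  rw [← sub_nonneg]
  have heq2 : k * Real.tan ((a+θ)/2) + k * Real.tan ((a-θ)/2)
      + k * Real.tan ((a+θ)/2) * (k * Real.tan ((a-θ)/2)) - 1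
      = (k * Real.sin a + k^2*(sp*sm) - cp*cm)/(cp*cm) := by
    rw [hts, htm, e1]; field_simp
  rw [heq2]
  apply div_nonneg (by linarith) (by positivity)

/-- For `0 < γ < 1` and any `z` in the unit disk with `|1−z| ≤ γ`,
the harmonic measure of the arc `{ζ ∈ T : |1−ζ| ≤ γ}` satisfies `ω_γ(z) ≥ 1/4`. -/
theorem omegaGamma_ge_quarter (γ : ℝ) (hγ0 : 0 < γ) (hγ1 : γ < 1)
    (z : ℂ) (hzD : ‖z‖ < 1) (hz : ‖1 - z‖ ≤ γ) :
    (1 / 4 : ℝ) ≤ omegaGamma γ z := by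
  have hπ := Real.pi_pos
  have hz0 : z ≠ 0 := by
    intro h; rw [h] at hz; simp at hz; linarith
  set r := ‖z‖ with hrdef
  set θ := Complex.arg z with hθdef
  have hr0 : 0 < r := by rw [hrdef]; exact norm_pos_iff.mpr hz0
  have hr1 : r < 1 := hzD
  have hre : z.re = r * Real.cos θ := by
    rw [hθdef, Complex.cos_arg hz0, hrdef]; field_simp
  have him : z.im = r * Real.sin θ := by
    rw [hθdef, Complex.sin_arg, hrdef]; field_simp
  have habs2 : ∀ t : ℝ, ‖Complex.exp (t * Complex.I) - z‖^2
      = 1 + r^2 - 2*r*Real.cos (t - θ) := by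
    intro t
    rw [Complex.sq_norm, Complex.normSq_apply, Complex.sub_re, Complex.sub_im,
      Complex.exp_ofReal_mul_I_re, Complex.exp_ofReal_mul_I_im, hre, him, Real.cos_sub]
    linear_combination Real.sin_sq_add_cos_sq t + r^2 * Real.sin_sq_add_cos_sq θ
  have harc : ∀ t : ℝ, (‖1 - Complex.exp (t * Complex.I)‖)^2
      = 2 - 2*Real.cos t := by
    intro t
    rw [Complex.sq_norm, Complex.normSq_apply, Complex.sub_re, Complex.sub_im,
      Complex.exp_ofReal_mul_I_re, Complex.exp_ofReal_mul_I_im, Complex.one_re, Complex.one_im]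
    linear_combination Real.sin_sq_add_cos_sq t

  -- the constraint in polar form
  have hcon : 1 + r^2 - 2*r*Real.cos θ ≤ γ^2 := by
    have h2 : ‖1 - z‖^2 ≤ γ^2 :=
      pow_le_pow_left₀ (norm_nonneg _) hz 2
    have h3 : ‖1 - z‖^2 = 1 + r^2 - 2*r*Real.cos θ := by
      rw [Complex.sq_norm, Complex.normSq_apply, Complex.sub_re, Complex.sub_im,
        Complex.one_re, Complex.one_im, hre, him]
      linear_combination r^2 * Real.sin_sq_add_cos_sq θ
    linarith [h3 ▸ h2]
  have hcθ : 0 < Real.cos θ := by nlinarith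
  have hθlo : -(π/2) < θ := by
    by_contra h
    push_neg at h
    have h1 : Real.cos θ = Real.cos (-θ) := (Real.cos_neg θ).symm
    have h2 : Real.cos (-θ) ≤ 0 :=
      Real.cos_nonpos_of_pi_div_two_le_of_le (by linarith)
        (by linarith [Complex.neg_pi_lt_arg z])
    linarith
  have hθhi : θ < π/2 := by
    by_contra h
    push_neg at h
    have h2 : Real.cos θ ≤ 0 :=
      Real.cos_nonpos_of_pi_div_two_le_of_le h (by linarith [Complex.arg_le_pi z])
    linarith
  -- the half-arc length a
  set a := 2 * Real.arcsin (γ/2) with hadef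
  have ha0 : 0 < a := by
    rw [hadef]; have : 0 < Real.arcsin (γ/2) := Real.arcsin_pos.2 (by linarith); linarith
  have ha4 : a < π/2 := by
    rw [hadef]
    have hs2 : (1:ℝ) < Real.sqrt 2 := by
      have h1 : (1:ℝ) = Real.sqrt 1 := (Real.sqrt_one).symm
      rw [h1]; exact Real.sqrt_lt_sqrt (by norm_num) (by norm_num)
    have h2 : Real.arcsin (γ/2) < π/4 := by
      rw [Real.arcsin_lt_iff_lt_sin' ⟨by linarith, by linarith⟩, Real.sin_pi_div_four]
      nlinarith
    linarith
  have hγ2 : γ^2 = 2 - 2*Real.cos a := by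
    have hsh : Real.sin (a/2) = γ/2 := by
      rw [hadef, show 2 * Real.arcsin (γ/2) / 2 = Real.arcsin (γ/2) by ring]
      exact Real.sin_arcsin (by linarith) (by linarith)
    have h := Real.cos_two_mul' (a/2)
    rw [show 2*(a/2) = a by ring] at h
    have hpyth := Real.sin_sq_add_cos_sq (a/2)
    nlinarith [hsh, h]
  -- the Poisson kernel as a real function
  set P : ℝ → ℝ := fun t => (1 - r^2)/(1 + r^2 - 2*r*Real.cos (t - θ)) with hPdef
  have hPden : ∀ t : ℝ, 0 < 1 + r^2 - 2*r*Real.cos (t - θ) := by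
    intro t
    nlinarith [Real.cos_le_one (t - θ), sq_nonneg (1 - r)]
  have hPcont : Continuous P := by
    apply continuous_const.div
    · fun_prop
    · exact fun t => (hPden t).ne'
  have hPnonneg : ∀ t : ℝ, 0 ≤ P t := by
    intro t
    apply div_nonneg (by nlinarith) (hPden t).le
  -- the integrand
  set f : ℝ → ℝ := fun t =>
    (if ‖1 - Complex.exp (t * Complex.I)‖ ≤ γ then
      (1 - r ^ 2) / ‖Complex.exp (t * Complex.I) - z‖ ^ 2
    else 0) with hfdef
  set S : Set ℝ := {t | ‖1 - Complex.exp (t * Complex.I)‖ ≤ γ} with hSdef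
  have hScont : Continuous fun t : ℝ => ‖1 - Complex.exp (t * Complex.I)‖ :=
    continuous_norm.comp (continuous_const.sub
      (Complex.continuous_exp.comp (Complex.continuous_ofReal.mul continuous_const)))
  have hS : MeasurableSet S := by
    rw [hSdef]
    exact (isClosed_le hScont continuous_const).measurableSet
  have hfInd : f = S.indicator P := by
    funext t
    simp only [hfdef, hSdef, hPdef, Set.indicator_apply, Set.mem_setOf_eq]
    split_ifs with h
    · rw [habs2 t]
    · rfl
  have hfInt : ∀ c d : ℝ, IntervalIntegrable f MeasureTheory.volume c d := by
    intro c d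
    rw [hfInd, intervalIntegrable_iff]
    exact (hPcont.integrableOn_uIoc).indicator hS
  have hfnonneg : ∀ t : ℝ, 0 ≤ f t := by
    intro t
    rw [hfInd]
    exact Set.indicator_nonneg (fun t _ => hPnonneg t) t
  -- splitting the integral
  have hale : a ≤ 2*π - a := by linarith
  have hsplit : (∫ t in (0:ℝ)..(2*π), f t)
      = (∫ t in (0:ℝ)..a, f t) + ((∫ t in a..(2*π - a), f t)
        + (∫ t in (2*π - a)..(2*π), f t)) := by
    rw [intervalIntegral.integral_add_adjacent_intervals (hfInt a (2*π - a)) (hfInt (2*π - a) (2*π)),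
      intervalIntegral.integral_add_adjacent_intervals (hfInt 0 a) (hfInt a (2*π))]
  have hmid : 0 ≤ ∫ t in a..(2*π - a), f t :=
    intervalIntegral.integral_nonneg hale (fun t _ => hfnonneg t)
  -- on the two boundary arcs the integrand equals P
  have hmem : ∀ t : ℝ, 0 ≤ t → t ≤ a → t ∈ S := by
    intro t ht0 hta
    rw [hSdef]
    have hct : Real.cos a ≤ Real.cos t :=
      Real.cos_le_cos_of_nonneg_of_le_pi ht0 (by linarith) hta
    have h2 : (‖1 - Complex.exp (t * Complex.I)‖)^2 ≤ γ^2 := by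
      rw [harc t, hγ2]; linarith
    exact (pow_le_pow_iff_left₀ (norm_nonneg _) hγ0.le two_ne_zero).mp h2
  have hmem' : ∀ t : ℝ, 2*π - a ≤ t → t ≤ 2*π → t ∈ S := by
    intro t ht0 hta
    rw [hSdef]
    have hcc : Real.cos (2*π - t) = Real.cos t := Real.cos_two_pi_sub t
    have hct : Real.cos a ≤ Real.cos (2*π - t) :=
      Real.cos_le_cos_of_nonneg_of_le_pi (by linarith) (by linarith) (by linarith)
    have h2 : (‖1 - Complex.exp (t * Complex.I)‖)^2 ≤ γ^2 := by
      rw [harc t, hγ2]; linarith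
    exact (pow_le_pow_iff_left₀ (norm_nonneg _) hγ0.le two_ne_zero).mp h2
  have hI1 : (∫ t in (0:ℝ)..a, f t) = ∫ t in (0:ℝ)..a, P t := by
    apply intervalIntegral.integral_congr
    intro t ht
    rw [Set.uIcc_of_le ha0.le] at ht
    rw [hfInd, Set.indicator_of_mem (hmem t ht.1 ht.2)]
  have hI3 : (∫ t in (2*π - a)..(2*π), f t) = ∫ t in (2*π - a)..(2*π), P t := by
    apply intervalIntegral.integral_congr
    intro t ht
    rw [Set.uIcc_of_le (by linarith : 2*π - a ≤ 2*π)] at ht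
    rw [hfInd, Set.indicator_of_mem (hmem' t ht.1 ht.2)]
  -- antiderivative
  have h1r : (0:ℝ) < 1 - r := by linarith
  set k := (1+r)/(1-r) with hkdef
  set F : ℝ → ℝ := fun u => 2 * Real.arctan (k * Real.tan ((u - θ)/2)) with hFdef
  have hderiv : ∀ t : ℝ, Real.cos ((t - θ)/2) ≠ 0 → HasDerivAt F (P t) t := by
    intro t hcs
    have h1 : HasDerivAt (fun u : ℝ => (u - θ)/2) ((1:ℝ)/2) t := by
      simpa using ((hasDerivAt_id t).sub_const θ).div_const 2
    have h2 : HasDerivAt Real.tan (1/Real.cos ((t - θ)/2)^2) ((t - θ)/2) :=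
      Real.hasDerivAt_tan hcs
    have h3 := h2.comp t h1
    have h4 := h3.const_mul k
    have h5 := (Real.hasDerivAt_arctan (k * Real.tan ((t - θ)/2))).comp t h4
    have h6 := h5.const_mul (2:ℝ)
    have hden2 : 1 + r^2 - 2*r*Real.cos (t - θ)
        = (1-r)^2*Real.cos ((t - θ)/2)^2 + (1+r)^2*Real.sin ((t - θ)/2)^2 := by
      have h2m := Real.cos_two_mul' ((t - θ)/2)
      rw [show 2*((t - θ)/2) = t - θ by ring] at h2m
      have hp := Real.sin_sq_add_cos_sq ((t - θ)/2)
      linear_combination (-(2*r))*h2m + (-(1+r^2))*hp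
    have hdenpos : (0:ℝ) < (1-r)^2*Real.cos ((t - θ)/2)^2 + (1+r)^2*Real.sin ((t - θ)/2)^2 := by
      rw [← hden2]; exact hPden t
    have heq : P t = 2 * (1 / (1 + (k * Real.tan ((t - θ)/2))^2)
        * (k * (1/Real.cos ((t - θ)/2)^2 * (1/2)))) := by
      simp only [hPdef]
      rw [hden2, Real.tan_eq_sin_div_cos, hkdef]
      have hx : (1:ℝ) + ((1+r)/(1-r) * (Real.sin ((t - θ)/2) / Real.cos ((t - θ)/2)))^2 ≠ 0 := by
        positivity
      field_simp
      ring
    rw [heq]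
    simpa [Function.comp] using h6
  have hcos1 : ∀ t ∈ Set.uIcc (0:ℝ) a, Real.cos ((t - θ)/2) ≠ 0 := by
    intro t ht
    rw [Set.uIcc_of_le ha0.le] at ht
    have hpos : 0 < Real.cos ((t - θ)/2) :=
      Real.cos_pos_of_mem_Ioo ⟨by linarith [ht.1, ht.2], by linarith [ht.1, ht.2]⟩
    exact hpos.ne'
  have hI1val : (∫ t in (0:ℝ)..a, P t) = F a - F 0 :=
    intervalIntegral.integral_eq_sub_of_hasDerivAt (fun t ht => hderiv t (hcos1 t ht))
      (hPcont.intervalIntegrable _ _)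
  have hcos3 : ∀ t ∈ Set.uIcc (2*π - a) (2*π), Real.cos ((t - θ)/2) ≠ 0 := by
    intro t ht
    rw [Set.uIcc_of_le (by linarith : 2*π - a ≤ 2*π)] at ht
    have hpos : 0 < Real.cos ((t - θ)/2 - π) :=
      Real.cos_pos_of_mem_Ioo ⟨by linarith [ht.1, ht.2], by linarith [ht.1, ht.2]⟩
    have hneg : Real.cos ((t - θ)/2) < 0 := by
      have h := Real.cos_sub_pi ((t - θ)/2)
      linarith
    exact hneg.ne
  have hI3val : (∫ t in (2*π - a)..(2*π), P t) = F (2*π) - F (2*π - a) :=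
    intervalIntegral.integral_eq_sub_of_hasDerivAt (fun t ht => hderiv t (hcos3 t ht))
      (hPcont.intervalIntegrable _ _)
  -- endpoint values of F
  have hF0 : F (2*π) = F 0 := by
    simp only [hFdef]
    rw [show (2*π - θ)/2 = (0 - θ)/2 + π by ring, Real.tan_add_pi]
  have hF2 : F (2*π - a) = -(2 * Real.arctan (k * Real.tan ((a + θ)/2))) := by
    simp only [hFdef]
    rw [show (2*π - a - θ)/2 = -((a + θ)/2) + π by ring, Real.tan_add_pi, Real.tan_neg,
      mul_neg, Real.arctan_neg]
    ring
  have hFa : F a = 2 * Real.arctan (k * Real.tan ((a - θ)/2)) := by simp only [hFdef]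
  -- core inequality
  have hcore : π/4 ≤ Real.arctan (k * Real.tan ((a + θ)/2))
      + Real.arctan (k * Real.tan ((a - θ)/2)) := by
    rcases le_or_gt 0 θ with hθ0 | hθ0
    · have h := core_ineq γ a r θ hγ0 hγ1 hadef hr0 hr1 hθ0 hθhi hcon
      rw [hkdef]; exact h
    · have hcon' : 1 + r^2 - 2*r*Real.cos (-θ) ≤ γ^2 := by rw [Real.cos_neg]; exact hcon
      have h := core_ineq γ a r (-θ) hγ0 hγ1 hadef hr0 hr1 (by linarith) (by linarith) hcon'
      rw [show a + -θ = a - θ by ring, show a - -θ = a + θ by ring] at h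
      rw [hkdef]
      linarith
  -- total lower bound
  have htot : π/2 ≤ ∫ t in (0:ℝ)..(2*π), f t := by
    rw [hsplit, hI1, hI3, hI1val, hI3val, hF0, hF2, hFa]
    linarith
  -- conclusion
  have homega : omegaGamma γ z = (1/(2*π)) * ∫ t in (0:ℝ)..(2*π), f t := rfl
  rw [homega]
  have hpos2 : (0:ℝ) < 1/(2*π) := by positivity
  calc (1/4:ℝ) = 1/(2*π) * (π/2) := by field_simp; ring
    _ ≤ 1/(2*π) * ∫ t in (0:ℝ)..(2*π), f t :=
        mul_le_mul_of_nonneg_left htot hpos2.le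
end

section
/- Let N ≥ 1 be an integer, M = 200N, and 0 < γ < 1/(500N). Let λ ∈ D with |1−λ| ≥ Mγ and let b_λ(z) = (z−λ)/(1−conj(λ)z). Then for every z ∈ D with |1−z| = γ one has log(1/|b_λ(z)|) ≤ (1/(4Nγ))·log(1/|λ|). -/
open Complex

set_option maxHeartbeats 1000000 in
/-- Lemma 1: let `N ≥ 1`, `M = 200N`, `0 < γ < 1/(500N)`; if `λ ∈ D`, `λ ≠ 0`,
`|1−λ| ≥ Mγ`, then for every `z ∈ D` with `|1−z| = γ`,
`log(1/|b_λ(z)|) ≤ (1/(4Nγ))·log(1/|λ|)`. -/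
theorem blaschke_log_bound_well_separated (N : ℕ) (hN : 1 ≤ N) (γ : ℝ)
    (hγ0 : 0 < γ) (hγ1 : γ < 1 / (500 * N)) (l : ℂ) (hl : ‖l‖ < 1)
    (hl0 : l ≠ 0) (hsep : 200 * N * γ ≤ ‖1 - l‖)
    (z : ℂ) (hzD : ‖z‖ < 1) (hz : ‖1 - z‖ = γ) :
    Real.log (1 / ‖(z - l) / (1 - (starRingEnd ℂ) l * z)‖) ≤
      (1 / (4 * N * γ)) * Real.log (1 / ‖l‖) := by
  have hN1 : (1:ℝ) ≤ N := by exact_mod_cast hN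
  set r := ‖l‖ with hrdef
  set a := ‖z‖ with hadef
  have hr0 : 0 < r := norm_pos_iff.mpr hl0
  have ha0 : 0 ≤ a := norm_nonneg z
  -- triangle: |1 - l| ≤ |1 - z| + |z - l|
  have htri : ‖1 - l‖ ≤ ‖1 - z‖ + ‖z - l‖ := by
    have h : (1 - l : ℂ) = (1 - z) + (z - l) := by ring
    rw [h]; exact norm_add_le _ _
  have hA : 199 * N * γ ≤ ‖z - l‖ := by
    have hNγ : γ ≤ N * γ := by nlinarith
    nlinarith [htri]
  set A := ‖z - l‖ with hAdef
  have hApos : 0 < A := lt_of_lt_of_le (by positivity) hA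
  -- 1 - a ≤ γ
  have ha1 : 1 - a ≤ γ := by
    have h : ‖(1:ℂ)‖ ≤ ‖1 - z‖ + ‖z‖ := by
      have h' : (1:ℂ) = (1 - z) + z := by ring
      nth_rewrite 1 [h']; exact norm_add_le _ _
    simpa [hz] using h
  -- denominator
  have hw : ‖(starRingEnd ℂ) l * z‖ < 1 := by
    rw [norm_mul, Complex.norm_conj]
    nlinarith [norm_nonneg l]
  have hDpos : 0 < ‖1 - (starRingEnd ℂ) l * z‖ := by
    have h : ‖(1:ℂ)‖ ≤ ‖1 - (starRingEnd ℂ) l * z‖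
        + ‖(starRingEnd ℂ) l * z‖ := by
      have h' : (1:ℂ) = (1 - (starRingEnd ℂ) l * z) + (starRingEnd ℂ) l * z := by ring
      nth_rewrite 1 [h']; exact norm_add_le _ _
    simp only [norm_one] at h
    linarith
  set D := ‖1 - (starRingEnd ℂ) l * z‖ with hDdef
  -- key identity
  have hid : D ^ 2 - A ^ 2 = (1 - a ^ 2) * (1 - r ^ 2) := by
    rw [hDdef, hAdef, hadef, hrdef, Complex.sq_norm, Complex.sq_norm, Complex.sq_norm,
      Complex.sq_norm]
    simp only [Complex.normSq_apply, Complex.sub_re, Complex.sub_im, Complex.mul_re,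
      Complex.mul_im, Complex.conj_re, Complex.conj_im, Complex.one_re, Complex.one_im]
    ring
  -- rewrite LHS
  have hLHS : Real.log (1 / ‖(z - l) / (1 - (starRingEnd ℂ) l * z)‖)
      = Real.log (D / A) := by
    rw [norm_div, one_div_div]
  rw [hLHS]
  have ht : Real.log (D / A) ≤ (1/2) * ((D^2 - A^2) / A^2) := by
    have hlog2 : Real.log (D / A) = (1/2) * Real.log ((D / A)^2) := by
      rw [Real.log_pow]; push_cast; ring
    have hpos : (0:ℝ) < (D / A)^2 := by positivity
    have hle := Real.log_le_sub_one_of_pos hpos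
    have heq : (D / A)^2 - 1 = (D^2 - A^2) / A^2 := by
      field_simp
    rw [hlog2]
    rw [heq] at hle
    linarith
  have key : (1 - a^2) * (1 - r^2) / A^2 ≤ (1 - r) / (2 * N * γ) := by
    rw [div_le_div_iff₀ (by positivity) (by positivity)]
    have h1 : 1 - a^2 ≤ 2*γ := by nlinarith
    have h2 : 1 - r^2 ≤ 2*(1-r) := by nlinarith [sq_nonneg (1 - r)]
    have h3 : (199 * N * γ)^2 ≤ A^2 := by
      have := pow_le_pow_left₀ (by positivity) hA 2
      linarith
    have h4 : (1 - a^2) * (1 - r^2) ≤ (2*γ) * (2*(1-r)) := by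
      have hnn : (0:ℝ) ≤ 1 - r^2 := by nlinarith
      have hnn2 : (0:ℝ) ≤ 2*γ := by linarith
      exact mul_le_mul h1 h2 hnn hnn2
    have hr1 : (0:ℝ) ≤ 1 - r := by linarith
    have h5 : (8:ℝ)*N ≤ 39601*N^2 := by nlinarith
    have h6 : (0:ℝ) ≤ γ^2*(1-r) := mul_nonneg (sq_nonneg γ) hr1
    calc (1-a^2)*(1-r^2)*(2*N*γ)
        ≤ (2*γ)*(2*(1-r))*(2*N*γ) := mul_le_mul_of_nonneg_right h4 (by positivity)
      _ = 8*N*(γ^2*(1-r)) := by ring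
      _ ≤ 39601*N^2*(γ^2*(1-r)) := mul_le_mul_of_nonneg_right h5 h6
      _ = (1-r)*(199*N*γ)^2 := by ring
      _ ≤ (1-r)*A^2 := mul_le_mul_of_nonneg_left h3 hr1
  -- RHS lower bound
  have hRlog : 1 - r ≤ Real.log (1 / r) := by
    rw [Real.log_div one_ne_zero (ne_of_gt hr0), Real.log_one]
    have := Real.log_le_sub_one_of_pos hr0
    linarith
  have hcoef : (0:ℝ) < 1 / (4 * N * γ) := by positivity
  calc Real.log (D / A) ≤ (1/2) * ((D^2 - A^2) / A^2) := ht
    _ = (1/2) * ((1 - a^2) * (1 - r^2) / A^2) := by rw [hid]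
    _ ≤ (1/2) * ((1 - r) / (2 * N * γ)) := by linarith [key]
    _ = (1 / (4 * N * γ)) * (1 - r) := by ring
    _ ≤ (1 / (4 * N * γ)) * Real.log (1 / r) := by
        exact mul_le_mul_of_nonneg_left hRlog hcoef.le
end
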